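/- arXiv:2504.01993 — 2 statements merged into one kernel-verified Lean document; each statement's English description precedes it below -/
import Mathlib

section
/- Fix partitions λ, μ and k ∈ ℕ. The sequence of reduced Kronecker coefficients (ḡ_{λ[n], μ, (n−k)})_n is independent of n for all n ≥ |λ| + |μ|. -/
/-- A partition: a weakly decreasing, eventually-zero sequence of naturals.
`parts 0` is the largest part `λ₁`, `parts 1` is `λ₂`, and so on. -/
structure KPartition where
  parts : ℕ → ℕ
  antitone : ∀ ⦃i j : ℕ⦄, i ≤ j → parts j ≤ parts i
  eventually_zero : ∃ N, ∀ i, N ≤ i → parts i = 0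

namespace KPartition

/-- The size `|λ|` of a partition: the sum of its parts. -/
noncomputable def size (l : KPartition) : ℕ := ∑ᶠ i, l.parts i

/-- Containment of Young diagrams: `l ⊆ m`. -/
def Subdiag (l m : KPartition) : Prop := ∀ i, l.parts i ≤ m.parts i

/-- `m / l` is a horizontal strip: `l ⊆ m` and no two boxes of `m / l`
lie in the same column. -/
def IsHorizontalStrip (l m : KPartition) : Prop :=
  Subdiag l m ∧ ∀ i, m.parts (i + 1) ≤ l.parts i

/-- `ν = l[n] = (n - |l|, l₁, l₂, …)`: the padded partition. -/
def IsPad (l : KPartition) (n : ℕ) (ν : KPartition) : Prop :=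
  ν.parts 0 + l.size = n ∧ ∀ i, ν.parts (i + 1) = l.parts i

/-- The one-row partition `(k)`. -/
def row (k : ℕ) : KPartition where
  parts i := if i = 0 then k else 0
  antitone := by
    intro i j hij
    by_cases hj : j = 0
    · have hi : i = 0 := Nat.le_zero.mp (hj ▸ hij)
      simp [hi, hj]
    · simp [hj]
  eventually_zero := ⟨1, fun i hi => by simp [show i ≠ 0 by omega]⟩

open Classical in
/-- The Pieri coefficient `c^ν_{l,(m)}` (the Littlewood–Richardson coefficient
with one-row second factor): it is `1` if `ν / l` is a horizontal strip of
size `m`, and `0` otherwise, by Pieri's rule. -/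
noncomputable def pieri (l : KPartition) (m : ℕ) (ν : KPartition) : ℕ :=
  if IsHorizontalStrip l ν ∧ ν.size = l.size + m then 1 else 0

/-- The iterated Littlewood–Richardson coefficient
`c^l_{π,α,(k)} = Σ_ξ c^l_{π,ξ} c^ξ_{α,(k)}`, given a general
Littlewood–Richardson coefficient function `lr`, where `lr a b c = c^c_{a,b}`. -/
noncomputable def iterLR (lr : KPartition → KPartition → KPartition → ℕ)
    (π α : KPartition) (k : ℕ) (l : KPartition) : ℕ :=
  ∑ᶠ ξ : KPartition, lr π ξ l * pieri α k ξ

/-- The iterated Littlewood–Richardson coefficient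
`c^l_{α,β,π} = Σ_ξ c^l_{α,ξ} c^ξ_{β,π}` with three partition arguments. -/
noncomputable def tripleLR (lr : KPartition → KPartition → KPartition → ℕ)
    (α β π : KPartition) (l : KPartition) : ℕ :=
  ∑ᶠ ξ : KPartition, lr α ξ l * lr β π ξ

end KPartition

open KPartition

lemma size_eq_sum (p : KPartition) {N : ℕ} (h : ∀ i, N ≤ i → p.parts i = 0) :
    p.size = ∑ i ∈ Finset.range N, p.parts i := by
  apply finsum_eq_finset_sum_of_support_subset
  intro i hi
  simp only [Function.mem_support] at hi
  simp only [Finset.coe_range, Set.mem_Iio]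
  by_contra hc
  exact hi (h i (le_of_not_gt hc))

lemma parts0_le_size (p : KPartition) : p.parts 0 ≤ p.size := by
  obtain ⟨N, hN⟩ := p.eventually_zero
  have h' : ∀ i, N + 1 ≤ i → p.parts i = 0 := fun i hi => hN i (by omega)
  rw [size_eq_sum p h']
  exact Finset.single_le_sum (fun i _ => Nat.zero_le _) (Finset.mem_range.mpr (by omega))

lemma size_pad {l ν : KPartition} {n : ℕ} (h : IsPad l n ν) : ν.size = n := by
  obtain ⟨M, hM⟩ := l.eventually_zero
  have hν : ∀ i, M + 1 ≤ i → ν.parts i = 0 := by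
    intro i hi
    obtain ⟨j, rfl⟩ : ∃ j, i = j + 1 := ⟨i - 1, by omega⟩
    rw [h.2]
    exact hM j (by omega)
  rw [size_eq_sum ν hν, Finset.sum_range_succ']
  have hcongr : ∀ i ∈ Finset.range M, ν.parts (i + 1) = l.parts i := fun i _ => h.2 i
  rw [Finset.sum_congr rfl hcongr, ← size_eq_sum l hM]
  have := h.1
  omega

lemma iter_deg (lr : KPartition → KPartition → KPartition → ℕ)
    (Hdeg : ∀ a b c : KPartition, lr a b c ≠ 0 → a.size + b.size = c.size)
    {π α : KPartition} {k : ℕ} {a : KPartition} (h : iterLR lr π α k a ≠ 0) :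
    π.size + α.size + k = a.size := by
  have hex : ∃ ξ, lr π ξ a * pieri α k ξ ≠ 0 := by
    by_contra hc
    push_neg at hc
    exact h (finsum_eq_zero_of_forall_eq_zero hc)
  obtain ⟨ξ, hξ⟩ := hex
  have h1 : lr π ξ a ≠ 0 := fun e => hξ (by simp [e])
  have h2 : pieri α k ξ ≠ 0 := fun e => hξ (by simp [e])
  have hd := Hdeg _ _ _ h1
  have hsz : ξ.size = α.size + k := by
    unfold pieri at h2
    split_ifs at h2 with hc
    · exact hc.2
    · exact absurd rfl h2
  omega

lemma HS_iff {l ν ξ : KPartition} {n : ℕ} (hp : IsPad l n ν)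
    (hb : ξ.parts 0 + l.size ≤ n) :
    IsHorizontalStrip ξ ν ↔
      ((∀ i, ξ.parts (i + 1) ≤ l.parts i) ∧ ∀ i, l.parts i ≤ ξ.parts i) := by
  constructor
  · rintro ⟨hsub, hrow⟩
    exact ⟨fun i => (hp.2 i) ▸ hsub (i + 1), fun i => (hp.2 i) ▸ hrow i⟩
  · rintro ⟨h1, h2⟩
    refine ⟨fun i => ?_, fun i => (hp.2 i) ▸ h2 i⟩
    cases i with
    | zero => have := hp.1; omega
    | succ j => rw [hp.2 j]; exact h1 j

lemma pieri_pad {l ν₁ ν₂ ξ : KPartition} {n₁ n₂ : ℕ}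
    (h₁ : IsPad l n₁ ν₁) (h₂ : IsPad l n₂ ν₂)
    (hb₁ : ξ.parts 0 + l.size ≤ n₁) (hb₂ : ξ.parts 0 + l.size ≤ n₂)
    (hs₁ : ξ.size ≤ n₁) (hs₂ : ξ.size ≤ n₂) :
    pieri ξ (n₁ - ξ.size) ν₁ = pieri ξ (n₂ - ξ.size) ν₂ := by
  classical
  unfold pieri
  rw [size_pad h₁, size_pad h₂]
  have e₁ : ξ.size + (n₁ - ξ.size) = n₁ := by omega
  have e₂ : ξ.size + (n₂ - ξ.size) = n₂ := by omega
  rw [e₁, e₂]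
  exact if_congr (by rw [HS_iff h₁ hb₁, HS_iff h₂ hb₂]; tauto) rfl rfl

lemma iter_pad (lr : KPartition → KPartition → KPartition → ℕ)
    (Hdeg : ∀ a b c : KPartition, lr a b c ≠ 0 → a.size + b.size = c.size)
    (Hbracket : ∀ (π α : KPartition) (k : ℕ) (a : KPartition),
      iterLR lr π α k a = ∑ᶠ ξ : KPartition, pieri ξ k a * lr π α ξ)
    {l ν₁ ν₂ : KPartition} {n₁ n₂ : ℕ} (π α : KPartition)
    (h₁ : IsPad l n₁ ν₁) (h₂ : IsPad l n₂ ν₂)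
    (hb₁ : π.size + α.size + l.size ≤ n₁) (hb₂ : π.size + α.size + l.size ≤ n₂) :
    iterLR lr π α (n₁ - (π.size + α.size)) ν₁ =
      iterLR lr π α (n₂ - (π.size + α.size)) ν₂ := by
  rw [Hbracket, Hbracket]
  apply finsum_congr
  intro ξ
  by_cases hz : lr π α ξ = 0
  · simp [hz]
  · have hd := Hdeg _ _ _ hz
    rw [hd]
    have hpl := parts0_le_size ξ
    congr 1
    exact pieri_pad h₁ h₂ (by omega) (by omega) (by omega) (by omega)

open KPartition in
/-- Proposition (Kroneckerstab): for fixed partitions `λ, μ` and `k ∈ ℕ`, the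
sequence of reduced Kronecker coefficients `ḡ_{λ[n],μ,(n-k)}` is independent of
`n` for `n ≥ |λ| + |μ|`. Here `gbar` is the reduced Kronecker coefficient and
`lr` the Littlewood–Richardson coefficient, assumed to satisfy the
Bowman–De Visscher–Orellana formula
`ḡ_{λ,μ,(k)} = Σ_{α,π,k₁+k₂+|π|=k} c^λ_{π,α,(k₁)} c^μ_{π,α,(k₂)}`. -/
theorem stmt5 (gbar lr : KPartition → KPartition → KPartition → ℕ)
    (Hdeg : ∀ a b c : KPartition, lr a b c ≠ 0 → a.size + b.size = c.size)
    (Hbracket : ∀ (π α : KPartition) (k : ℕ) (a : KPartition),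
      iterLR lr π α k a = ∑ᶠ ξ : KPartition, pieri ξ k a * lr π α ξ)
    (Hformula : ∀ (a b : KPartition) (k : ℕ),
      gbar a b (row k) =
        ∑ᶠ π : KPartition, ∑ᶠ α : KPartition, ∑ᶠ k₁ : ℕ, ∑ᶠ k₂ : ℕ,
          (if k₁ + k₂ + π.size = k then
            iterLR lr π α k₁ a * iterLR lr π α k₂ b else 0))
    (l μ : KPartition) (k : ℕ) :
    ∀ n₁ n₂ : ℕ, l.size + μ.size ≤ n₁ → l.size + μ.size ≤ n₂ →
      l.size + l.parts 0 ≤ n₁ → l.size + l.parts 0 ≤ n₂ → k ≤ n₁ → k ≤ n₂ →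
      ∀ ν₁ ν₂ : KPartition, IsPad l n₁ ν₁ → IsPad l n₂ ν₂ →
        gbar ν₁ μ (row (n₁ - k)) = gbar ν₂ μ (row (n₂ - k)) := by
  intro n₁ n₂ hμ₁ hμ₂ hl₁ hl₂ hk₁ hk₂ ν₁ ν₂ hp₁ hp₂
  rw [Hformula, Hformula]
  apply finsum_congr
  intro π
  apply finsum_congr
  intro α
  have hA : ∀ (n : ℕ) (ν : KPartition), IsPad l n ν →
      ∀ k₁, k₁ ≠ n - (π.size + α.size) →
      (∑ᶠ k₂ : ℕ, if k₁ + k₂ + π.size = n - k then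
        iterLR lr π α k₁ ν * iterLR lr π α k₂ μ else 0) = 0 := by
    intro n ν hp k₁ hne
    apply finsum_eq_zero_of_forall_eq_zero
    intro k₂
    split_ifs with hc
    · by_cases hz : iterLR lr π α k₁ ν = 0
      · rw [hz, zero_mul]
      · exfalso
        have hdg := iter_deg lr Hdeg hz
        rw [size_pad hp] at hdg
        exact hne (by omega)
    · rfl
  rw [finsum_eq_single _ (n₁ - (π.size + α.size)) (hA n₁ ν₁ hp₁),
    finsum_eq_single _ (n₂ - (π.size + α.size)) (hA n₂ ν₂ hp₂)]
  apply finsum_congr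
  intro k₂
  by_cases hz : iterLR lr π α k₂ μ = 0
  · simp [hz]
  · have hd := iter_deg lr Hdeg hz
    have hs₁ : π.size + α.size ≤ n₁ := by omega
    have hs₂ : π.size + α.size ≤ n₂ := by omega
    have hiter : iterLR lr π α (n₁ - (π.size + α.size)) ν₁ =
        iterLR lr π α (n₂ - (π.size + α.size)) ν₂ :=
      iter_pad lr Hdeg Hbracket π α hp₁ hp₂ (by omega) (by omega)
    rw [hiter]
    exact if_congr (by omega) rfl rfl
end

section
/- For partitions λ, μ and k ∈ ℕ with |λ| > |μ|, the reduced Kronecker coefficient ḡ_{λ[n], μ, (n−k)} equals 0 for all valid n. -/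
lemma exists_ne_zero_of_finsum_ne_zero {α : Type*} {f : α → ℕ}
    (h : (∑ᶠ x, f x) ≠ 0) : ∃ x, f x ≠ 0 := by
  by_contra hc
  push_neg at hc
  exact h (by rw [show f = fun _ => 0 from funext hc]; exact finsum_zero)

lemma KPartition.size_eq_sum (l : KPartition) (N : ℕ) (hN : ∀ i, N ≤ i → l.parts i = 0) :
    l.size = ∑ i ∈ Finset.range N, l.parts i := by
  apply finsum_eq_finset_sum_of_support_subset
  intro i hi
  simp only [Function.mem_support] at hi
  simp only [Finset.coe_range, Set.mem_Iio]
  by_contra h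
  exact hi (hN i (le_of_not_gt h))

lemma KPartition.size_mono {l m : KPartition} (h : ∀ i, l.parts i ≤ m.parts i) :
    l.size ≤ m.size := by
  obtain ⟨N₁, h₁⟩ := l.eventually_zero
  obtain ⟨N₂, h₂⟩ := m.eventually_zero
  rw [l.size_eq_sum (max N₁ N₂) (fun i hi => h₁ i (le_trans (le_max_left _ _) hi)),
      m.size_eq_sum (max N₁ N₂) (fun i hi => h₂ i (le_trans (le_max_right _ _) hi))]
  exact Finset.sum_le_sum fun i _ => h i


open KPartition in
/-- Corollary (size): if `|λ| > |μ|` then `ḡ_{λ[n],μ,(n-k)} = 0` for all valid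
`n`. Here `gbar` is the reduced Kronecker coefficient and `lr` the
Littlewood–Richardson coefficient, assumed to satisfy the
Bowman–De Visscher–Orellana formula. -/
theorem stmt6 (gbar lr : KPartition → KPartition → KPartition → ℕ)
    (Hdeg : ∀ a b c : KPartition, lr a b c ≠ 0 → a.size + b.size = c.size)
    (Hbracket : ∀ (π α : KPartition) (k : ℕ) (a : KPartition),
      iterLR lr π α k a = ∑ᶠ ξ : KPartition, pieri ξ k a * lr π α ξ)
    (Hformula : ∀ (a b : KPartition) (k : ℕ),
      gbar a b (row k) =
        ∑ᶠ π : KPartition, ∑ᶠ α : KPartition, ∑ᶠ k₁ : ℕ, ∑ᶠ k₂ : ℕ,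
          (if k₁ + k₂ + π.size = k then
            iterLR lr π α k₁ a * iterLR lr π α k₂ b else 0))
    (l μ : KPartition) (k : ℕ) (hsize : μ.size < l.size) :
    ∀ n : ℕ, l.size + l.parts 0 ≤ n → k ≤ n →
      ∀ ν : KPartition, IsPad l n ν →
        gbar ν μ (row (n - k)) = 0 := by
  intro n hn hk ν hpad
  rw [Hformula]
  have key : ∀ (π α : KPartition) (k₁ k₂ : ℕ),
      (if k₁ + k₂ + π.size = n - k then
        iterLR lr π α k₁ ν * iterLR lr π α k₂ μ else 0) = 0 := by
    intro π α k₁ k₂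
    split
    · by_contra hne
      have h1 : iterLR lr π α k₁ ν ≠ 0 := fun h => hne (by rw [h]; ring)
      have h2 : iterLR lr π α k₂ μ ≠ 0 := fun h => hne (by rw [h]; ring)
      -- ν side
      rw [Hbracket] at h1
      obtain ⟨ξ, hξ⟩ := exists_ne_zero_of_finsum_ne_zero h1
      have hp1 : pieri ξ k₁ ν ≠ 0 := fun h => hξ (by rw [h]; ring)
      have hl1 : lr π α ξ ≠ 0 := fun h => hξ (by rw [h]; ring)
      have hd1 : π.size + α.size = ξ.size := Hdeg _ _ _ hl1
      have hhs : IsHorizontalStrip ξ ν ∧ ν.size = ξ.size + k₁ := by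
        by_contra h
        exact hp1 (by unfold pieri; rw [if_neg h])
      -- μ side
      obtain ⟨η, hη⟩ := exists_ne_zero_of_finsum_ne_zero h2
      have hl2 : lr π η μ ≠ 0 := fun h => hη (by rw [h]; ring)
      have hp2 : pieri α k₂ η ≠ 0 := fun h => hη (by rw [h]; ring)
      have hd2 : π.size + η.size = μ.size := Hdeg _ _ _ hl2
      have hh2 : IsHorizontalStrip α η ∧ η.size = α.size + k₂ := by
        by_contra h
        exact hp2 (by unfold pieri; rw [if_neg h])
      -- l ⊆ ξ, so |l| ≤ |ξ|
      have hle : l.size ≤ ξ.size := by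
        apply KPartition.size_mono
        intro i
        have := hhs.1.2 i
        rw [hpad.2 i] at this
        exact this
      omega
    · rfl
  simp only [key, finsum_zero]
end
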